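/- Let G be the labeled multigraph of a 2→1 hypergraph with Property S and at most one hyperedge per 3-set. If {x,y} is a strong overloaded pair (there are parallel edges on {x,y} and every edge on {x,y} has a label appearing on some other edge incident to x or y), then there are exactly two parallel edges on {x,y}, with labels r and q, the only other edges incident to x or y are an edge xq with label r and an edge yr with label q, and no further edges of G are incident to x or y. -/
import Mathlib

private lemma pair_mem' {V : Type*} [DecidableEq V] {s : Finset V} (h : s.card = 2) {x : V}
    (hx : x ∈ s) : ∃ a, a ≠ x ∧ s = {x, a} := by
  obtain ⟨u, v, huv, rfl⟩ := Finset.card_eq_two.mp h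
  simp only [Finset.mem_insert, Finset.mem_singleton] at hx
  rcases hx with rfl | rfl
  · exact ⟨v, fun h => huv h.symm, rfl⟩
  · exact ⟨u, huv, Finset.pair_comm u x⟩

private lemma interL1 {V : Type*} [DecidableEq V] {c x a q u : V}
    (h1 : c ≠ q) (h2 : c ≠ u) (h3 : a ≠ q) (h4 : a ≠ u) :
    (insert c {x, a} : Finset V) ∩ insert q {x, u} = {x} := by
  ext z
  simp only [Finset.mem_inter, Finset.mem_insert, Finset.mem_singleton]
  constructor
  · rintro ⟨h | h | h, g | g | g⟩ <;> subst_vars <;> simp_all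
  · rintro rfl; tauto

private lemma interL2 {V : Type*} [DecidableEq V] {c x a q u : V}
    (h1 : c ≠ q) (h2 : c ≠ u) (h3 : a ≠ q) (h4 : a ≠ u) :
    (insert c {x, a} : Finset V) ∩ insert q {u, x} = {x} := by
  rw [Finset.pair_comm u x]; exact interL1 h1 h2 h3 h4

private lemma insEq1 {V : Type*} [DecidableEq V] (a b c : V) :
    (insert a {b, c} : Finset V) = insert c {b, a} := by
  ext z
  simp only [Finset.mem_insert, Finset.mem_singleton]
  tauto

private lemma insEq2 {V : Type*} [DecidableEq V] (a b c : V) :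
    (insert a {b, c} : Finset V) = insert c {a, b} := by
  ext z
  simp only [Finset.mem_insert, Finset.mem_singleton]
  tauto

theorem stmt16 {V : Type*} [DecidableEq V] (H : Set (Finset V × V))
    (hedge : ∀ e ∈ H, e.1.card = 2 ∧ e.2 ∉ e.1)
    (huniq : ∀ e₁ ∈ H, ∀ e₂ ∈ H, insert e₁.2 e₁.1 = insert e₂.2 e₂.1 → e₁ = e₂)
    (hS : ∀ e₁ ∈ H, ∀ e₂ ∈ H, ∀ v : V,
      (insert e₁.2 e₁.1) ∩ (insert e₂.2 e₂.1) = {v} → v = e₁.2 ∨ v = e₂.2)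
    (x y : V) (hxy : x ≠ y)
    (c₁ c₂ : V) (hc : c₁ ≠ c₂)
    (h1 : (({x, y} : Finset V), c₁) ∈ H) (h2 : (({x, y} : Finset V), c₂) ∈ H)
    (hstrong : ∀ c : V, (({x, y} : Finset V), c) ∈ H →
      ∃ e ∈ H, e ≠ (({x, y} : Finset V), c) ∧ e.2 = c ∧ (x ∈ e.1 ∨ y ∈ e.1)) :
    ∃ r q : V, r ≠ q ∧
      (({x, y} : Finset V), r) ∈ H ∧ (({x, y} : Finset V), q) ∈ H ∧
      (({x, q} : Finset V), r) ∈ H ∧ (({y, r} : Finset V), q) ∈ H ∧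
      (∀ c : V, (({x, y} : Finset V), c) ∈ H → c = r ∨ c = q) ∧
      (∀ e ∈ H, x ∈ e.1 ∨ y ∈ e.1 →
        e = (({x, y} : Finset V), r) ∨ e = (({x, y} : Finset V), q) ∨
        e = (({x, q} : Finset V), r) ∨ e = (({y, r} : Finset V), q)) := by
  -- key step: the strong witness for label c sits on {x,c'} or {y,c'}
  have key : ∀ c c' : V, c ≠ c' → (({x, y} : Finset V), c) ∈ H →
      (({x, y} : Finset V), c') ∈ H →
      ((({x, c'} : Finset V), c) ∈ H ∨ (({y, c'} : Finset V), c) ∈ H) := by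
    intro c c' hcc' hcH hc'H
    have hcx : c ≠ x := by have := (hedge _ hcH).2; simp at this; tauto
    have hcy : c ≠ y := by have := (hedge _ hcH).2; simp at this; tauto
    have hc'x : c' ≠ x := by have := (hedge _ hc'H).2; simp at this; tauto
    have hc'y : c' ≠ y := by have := (hedge _ hc'H).2; simp at this; tauto
    obtain ⟨⟨P, c0⟩, heH, hne, hlab, hinc⟩ := hstrong c hcH
    simp only at hlab hinc
    subst c0
    rcases hinc with hxP | hyP
    · obtain ⟨a, hax, rfl⟩ := pair_mem' (hedge _ heH).1 hxP
      have hay : a ≠ y := by rintro rfl; exact hne rfl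
      by_cases hac' : a = c'
      · subst hac'; exact Or.inl heH
      · exfalso
        rcases hS _ heH _ hc'H x (interL1 hcc' hcy hac' hay) with h | h
        · exact hcx h.symm
        · exact hc'x h.symm
    · obtain ⟨b, hby, rfl⟩ := pair_mem' (hedge _ heH).1 hyP
      have hbx : b ≠ x := by
        rintro rfl; exact hne (by rw [Finset.pair_comm])
      by_cases hbc' : b = c'
      · subst hbc'; exact Or.inr heH
      · exfalso
        rcases hS _ heH _ hc'H y (interL2 hcc' hcx hbc' hbx) with h | h
        · exact hcy h.symm
        · exact hc'y h.symm
  -- the main conclusion, given a correctly oriented configuration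
  have final : ∀ r q : V, r ≠ q → (({x, y} : Finset V), r) ∈ H →
      (({x, y} : Finset V), q) ∈ H → (({x, q} : Finset V), r) ∈ H →
      (({y, r} : Finset V), q) ∈ H →
      ∃ r q : V, r ≠ q ∧
      (({x, y} : Finset V), r) ∈ H ∧ (({x, y} : Finset V), q) ∈ H ∧
      (({x, q} : Finset V), r) ∈ H ∧ (({y, r} : Finset V), q) ∈ H ∧
      (∀ c : V, (({x, y} : Finset V), c) ∈ H → c = r ∨ c = q) ∧
      (∀ e ∈ H, x ∈ e.1 ∨ y ∈ e.1 →
        e = (({x, y} : Finset V), r) ∨ e = (({x, y} : Finset V), q) ∨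
        e = (({x, q} : Finset V), r) ∨ e = (({y, r} : Finset V), q)) := by
    intro r q hrq hA hB hC hD
    have hrx : r ≠ x := by have := (hedge _ hA).2; simp at this; tauto
    have hry : r ≠ y := by have := (hedge _ hA).2; simp at this; tauto
    have hqx : q ≠ x := by have := (hedge _ hB).2; simp at this; tauto
    have hqy : q ≠ y := by have := (hedge _ hB).2; simp at this; tauto
    have main : ∀ e ∈ H, x ∈ e.1 ∨ y ∈ e.1 →
        e = (({x, y} : Finset V), r) ∨ e = (({x, y} : Finset V), q) ∨
        e = (({x, q} : Finset V), r) ∨ e = (({y, r} : Finset V), q) := by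
      rintro ⟨P, c⟩ heH hinc
      simp only at hinc
      by_cases hxP : x ∈ P
      · obtain ⟨a, hax, rfl⟩ := pair_mem' (hedge _ heH).1 hxP
        have hca : c ≠ a := by have := (hedge _ heH).2; simp at this; tauto
        have hcx : c ≠ x := by have := (hedge _ heH).2; simp at this; tauto
        by_cases hay : a = y
        · -- edge on {x, y}: label must be r or q
          by_cases hcr : c = r
          · exact Or.inl (by rw [hay, hcr])
          by_cases hcq : c = q
          · exact Or.inr (Or.inl (by rw [hay, hcq]))
          exfalso
          rw [hay] at heH
          rcases hS _ heH _ hC x (interL1 hcr hcq hry.symm hqy.symm) with h | h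
          · exact hcx h.symm
          · exact hrx h.symm
        · -- edge on {x, a} with a ∉ {x, y}
          by_cases haq : a = q
          · by_cases hcr : c = r
            · exact Or.inr (Or.inr (Or.inl (by rw [haq, hcr])))
            rw [haq] at heH
            by_cases hcy : c = y
            · exfalso
              rw [hcy] at heH
              have := huniq _ heH _ hB (insEq1 y x q)
              simp only [Prod.mk.injEq] at this
              exact hqy this.2.symm
            exfalso
            rcases hS _ heH _ hA x (interL1 hcr hcy hrq.symm hqy) with h | h
            · exact hcx h.symm
            · exact hrx h.symm
          · exfalso
            by_cases hcq : c = q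
            · rw [hcq] at heH
              by_cases har : a = r
              · rw [har] at heH
                have := huniq _ heH _ hC (insEq1 q x r)
                simp only [Prod.mk.injEq] at this
                exact hrq this.2.symm
              · rcases hS _ heH _ hA x (interL1 hrq.symm hqy har hay) with h | h
                · exact hqx h.symm
                · exact hrx h.symm
            · by_cases hcy : c = y
              · rw [hcy] at heH
                by_cases har : a = r
                · rw [har] at heH
                  have := huniq _ heH _ hA (insEq1 y x r)
                  simp only [Prod.mk.injEq] at this
                  exact hry this.2.symm
                · rcases hS _ heH _ hC x (interL1 hry.symm hqy.symm har haq) with h | h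
                  · exact hxy h
                  · exact hrx h.symm
              · rcases hS _ heH _ hB x (interL1 hcq hcy haq hay) with h | h
                · exact hcx h.symm
                · exact hqx h.symm
      · -- x ∉ P, so y ∈ P
        have hyP : y ∈ P := by tauto
        obtain ⟨b, hby, rfl⟩ := pair_mem' (hedge _ heH).1 hyP
        have hcb : c ≠ b := by have := (hedge _ heH).2; simp at this; tauto
        have hcy : c ≠ y := by have := (hedge _ heH).2; simp at this; tauto
        have hbx : b ≠ x := by rintro rfl; simp at hxP
        by_cases hbr : b = r
        · by_cases hcq : c = q
          · exact Or.inr (Or.inr (Or.inr (by rw [hbr, hcq])))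
          rw [hbr] at heH
          by_cases hcx : c = x
          · exfalso
            rw [hcx] at heH
            have := huniq _ heH _ hA (insEq2 x y r)
            simp only [Prod.mk.injEq] at this
            exact hrx this.2.symm
          exfalso
          rcases hS _ heH _ hB y (interL2 hcq hcx hrq hrx) with h | h
          · exact hcy h.symm
          · exact hqy h.symm
        · exfalso
          by_cases hcr : c = r
          · rw [hcr] at heH
            by_cases hbq : b = q
            · rw [hbq] at heH
              have := huniq _ heH _ hD (insEq1 r y q)
              simp only [Prod.mk.injEq] at this
              exact hrq this.2
            · rcases hS _ heH _ hB y (interL2 hrq hrx hbq hbx) with h | h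
              · exact hry h.symm
              · exact hqy h.symm
          · by_cases hcx : c = x
            · rw [hcx] at heH
              by_cases hbq : b = q
              · rw [hbq] at heH
                have := huniq _ heH _ hB (insEq2 x y q)
                simp only [Prod.mk.injEq] at this
                exact hqx this.2.symm
              · rcases hS _ heH _ hD y (interL1 hqx.symm hrx.symm hbq hbr) with h | h
                · exact hxy h.symm
                · exact hqy h.symm
            · rcases hS _ heH _ hA y (interL2 hcr hcx hbr hbx) with h | h
              · exact hcy h.symm
              · exact hry h.symm
    refine ⟨r, q, hrq, hA, hB, hC, hD, ?_, main⟩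
    intro c hcH
    rcases main _ hcH (by simp) with h | h | h | h
    · exact Or.inl (by simpa using congrArg Prod.snd h)
    · exact Or.inr (by simpa using congrArg Prod.snd h)
    · exfalso
      have h1 := congrArg Prod.fst h
      simp only at h1
      have h2 : y ∈ ({x, q} : Finset V) := h1 ▸ (by simp)
      simp only [Finset.mem_insert, Finset.mem_singleton] at h2
      rcases h2 with h' | h'
      · exact hxy h'.symm
      · exact hqy h'.symm
    · exfalso
      have h1 := congrArg Prod.fst h
      simp only at h1
      have h2 : x ∈ ({y, r} : Finset V) := h1 ▸ (by simp)
      simp only [Finset.mem_insert, Finset.mem_singleton] at h2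
      rcases h2 with h' | h'
      · exact hxy h'
      · exact hrx h'.symm
  -- assemble: locate the two side edges and orient
  rcases key c₁ c₂ hc h1 h2 with k1 | k1 <;> rcases key c₂ c₁ hc.symm h2 h1 with k2 | k2
  · exfalso
    have := huniq _ k1 _ k2 (insEq1 c₁ x c₂)
    simp only [Prod.mk.injEq] at this
    exact hc this.2
  · exact final c₁ c₂ hc h1 h2 k1 k2
  · exact final c₂ c₁ hc.symm h2 h1 k2 k1
  · exfalso
    have := huniq _ k1 _ k2 (insEq1 c₁ y c₂)
    simp only [Prod.mk.injEq] at this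
    exact hc this.2
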